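/- The partially linearized function f̄_β is continuous on (0,∞), convex, and satisfies f̄_β(1) = 0. -/

import Mathlib

/-- The partially linearized function `f̄_β`: it agrees with `f` (up to the additive
constant `C_{f,β}`) on `(0, 1/(1+β)]` and is linear (the tangent of `f` at `1/(1+β)`,
normalized so that `f̄_β 1 = 0`) on `(1/(1+β), ∞)`. Here `f'` denotes the derivative
of `f`. -/
noncomputable def partiallyLinearized (f f' : ℝ → ℝ) (β : ℝ) : ℝ → ℝ := fun u =>
  if u ≤ 1 / (1 + β) then
    f u + (-f (1 / (1 + β)) + f' (1 / (1 + β)) * (1 / (1 + β)) - f' (1 / (1 + β)))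
  else f' (1 / (1 + β)) * u - f' (1 / (1 + β))

/-- If `f` is convex, continuous and differentiable on `(0,∞)` with
`f 1 = 0`, and `β ≥ 0`, then the partially linearized function `f̄_β` is continuous on
`(0,∞)`, convex on `(0,∞)`, and satisfies `f̄_β 1 = 0`. -/
theorem partiallyLinearized_continuousOn_convexOn_apply_one
    (f f' : ℝ → ℝ) (β : ℝ) (hβ : 0 ≤ β)
    (hconv : ConvexOn ℝ (Set.Ioi 0) f)
    (hcont : ContinuousOn f (Set.Ioi 0))
    (hderiv : ∀ u ∈ Set.Ioi (0 : ℝ), HasDerivAt f (f' u) u)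
    (hf1 : f 1 = 0) :
    ContinuousOn (partiallyLinearized f f' β) (Set.Ioi 0) ∧
    ConvexOn ℝ (Set.Ioi 0) (partiallyLinearized f f' β) ∧
    partiallyLinearized f f' β 1 = 0 := by
  set c : ℝ := 1 / (1 + β) with hc_def
  have hβ1 : (0:ℝ) < 1 + β := by linarith
  have hc_pos : 0 < c := by positivity
  have hc1 : c ≤ 1 := by
    rw [hc_def, div_le_one hβ1]; linarith
  set C : ℝ := -f c + f' c * c - f' c with hC_def
  set L : ℝ → ℝ := fun u => f' c * u - f' c with hL_def
  set g := partiallyLinearized f f' β with hg_def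
  have hg_eq : ∀ u, g u = if u ≤ c then f u + C else L u := fun u => rfl
  have hgc : g c = L c := by
    rw [hg_eq, if_pos le_rfl]; simp only [hL_def, hC_def]; ring
  have hLd : ∀ u : ℝ, HasDerivAt L (f' c) u := by
    intro u
    have h := ((hasDerivAt_id u).const_mul (f' c)).sub_const (f' c)
    simp only [id_eq, mul_one] at h
    exact h
  -- the derivative of g
  have hd : ∀ u ∈ Set.Ioi (0:ℝ), HasDerivAt g (f' (min u c)) u := by
    intro u hu
    rcases lt_trichotomy u c with h | rfl | h
    · rw [min_eq_left h.le]
      refine HasDerivAt.congr_of_eventuallyEq ((hderiv u hu).add_const C) ?_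
      filter_upwards [Iio_mem_nhds h] with x hx
      rw [hg_eq, if_pos (le_of_lt hx)]
    · rw [min_self]
      have hleft : HasDerivWithinAt g (f' c) (Set.Iic c) c := by
        refine (((hderiv c hu).add_const C).hasDerivWithinAt).congr ?_ ?_
        · intro x hx; rw [hg_eq, if_pos (Set.mem_Iic.mp hx)]
        · rw [hg_eq, if_pos le_rfl]
      have hright : HasDerivWithinAt g (f' c) (Set.Ici c) c := by
        refine ((hLd c).hasDerivWithinAt).congr ?_ hgc
        · intro x hx
          rcases eq_or_lt_of_le (Set.mem_Ici.mp hx) with rfl | hlt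
          · exact hgc
          · rw [hg_eq, if_neg (not_le.mpr hlt)]
      have := hleft.union hright
      rwa [Set.Iic_union_Ici, hasDerivWithinAt_univ] at this
    · rw [min_eq_right h.le]
      refine HasDerivAt.congr_of_eventuallyEq (hLd u) ?_
      filter_upwards [Ioi_mem_nhds h] with x hx
      rw [hg_eq, if_neg (not_le.mpr hx)]
  have hcontg : ContinuousOn g (Set.Ioi 0) :=
    fun u hu => (hd u hu).continuousAt.continuousWithinAt
  refine ⟨hcontg, ?_, ?_⟩
  · -- convexity
    have hf'mono : MonotoneOn (deriv f) (Set.Ioi (0:ℝ)) :=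
      hconv.monotoneOn_deriv (fun x hx => (hderiv x hx).differentiableAt)
    refine MonotoneOn.convexOn_of_deriv (convex_Ioi 0) hcontg ?_ ?_
    · rw [interior_Ioi]
      exact fun x hx => (hd x hx).differentiableAt.differentiableWithinAt
    · rw [interior_Ioi]
      intro x hx y hy hxy
      rw [(hd x hx).deriv, (hd y hy).deriv]
      have hxc : min x c ∈ Set.Ioi (0:ℝ) := lt_min hx hc_pos
      have hyc : min y c ∈ Set.Ioi (0:ℝ) := lt_min hy hc_pos
      have h1 := (hderiv _ hxc).deriv
      have h2 := (hderiv _ hyc).deriv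
      rw [← h1, ← h2]
      exact hf'mono hxc hyc (min_le_min hxy le_rfl)
  · -- value at 1
    rw [hg_eq]
    rcases eq_or_lt_of_le hc1 with heq | h
    · rw [if_pos heq.ge, hC_def, heq, hf1]; ring
    · rw [if_neg (not_le.mpr h), hL_def]; ring
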